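/- Let f : ℝ^k → ℝ be a real-valued convex function with a unique minimizer x* ∈ ℝ^k. Then the minimization of f is Tykhonov well-posed: for every sequence (x_m) in ℝ^k with f(x_m) → f(x*), one has x_m → x*. In particular, for every ε > 0 there exists b > 0 such that { x ∈ ℝ^k : f(x) ≤ f(x*) + b } ⊆ { x ∈ ℝ^k : ‖x − x*‖ < ε }. -/

import Mathlib

open Filter Topology

/-- A real-valued convex function on `ℝᵏ` with a unique minimizer `x*` is
Tykhonov well-posed: every sequence `(x_m)` with `f(x_m) → f(x*)` converges to `x*`;
in particular, for every `ε > 0` some sublevel set `{f ≤ f(x*) + b}`, `b > 0`, is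
contained in the `ε`-ball around `x*`. -/
theorem stmt15 {k : ℕ} (f : (Fin k → ℝ) → ℝ)
    (hf : ConvexOn ℝ Set.univ f)
    (xstar : Fin k → ℝ)
    (hmin : ∀ x, f xstar ≤ f x)
    (huniq : ∀ x, x ≠ xstar → f xstar < f x) :
    (∀ xm : ℕ → Fin k → ℝ,
      Tendsto (fun m => f (xm m)) atTop (𝓝 (f xstar)) → Tendsto xm atTop (𝓝 xstar)) ∧
    (∀ ε > (0 : ℝ), ∃ b > (0 : ℝ),
      {x | f x ≤ f xstar + b} ⊆ {x | ‖x - xstar‖ < ε}) := by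
  have key : ∀ ε > (0 : ℝ), ∃ b > (0 : ℝ),
      {x | f x ≤ f xstar + b} ⊆ {x | ‖x - xstar‖ < ε} := by
    intro ε hε
    rcases Nat.eq_zero_or_pos k with hk | hk
    · refine ⟨1, one_pos, fun x _ => ?_⟩
      haveI : IsEmpty (Fin k) := by subst hk; infer_instance
      have hx : x = xstar := Subsingleton.elim x xstar
      simpa [hx] using hε
    · haveI : Nonempty (Fin k) := ⟨⟨0, hk⟩⟩
      have hcont : Continuous f := by
        rw [← continuousOn_univ]
        exact hf.continuousOn isOpen_univ
      have hsph : (Metric.sphere xstar ε).Nonempty :=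
        NormedSpace.sphere_nonempty.mpr hε.le
      obtain ⟨y0, hy0, hymin⟩ :=
        (isCompact_sphere xstar ε).exists_isMinOn hsph hcont.continuousOn
      set m := f y0 with hm
      have hy0ne : y0 ≠ xstar := by
        intro h
        rw [Metric.mem_sphere, h] at hy0
        simp at hy0
        linarith
      have hltm : f xstar < m := huniq y0 hy0ne
      refine ⟨(m - f xstar) / 2, by linarith, fun x hx => ?_⟩
      simp only [Set.mem_setOf_eq] at hx ⊢
      by_contra hcon
      push_neg at hcon
      have hr : (0 : ℝ) < ‖x - xstar‖ := lt_of_lt_of_le hε hcon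
      set t := ε / ‖x - xstar‖ with ht
      have ht0 : 0 < t := div_pos hε hr
      have ht1 : t ≤ 1 := (div_le_one hr).mpr hcon
      set y := xstar + t • (x - xstar) with hy
      have hysph : y ∈ Metric.sphere xstar ε := by
        rw [Metric.mem_sphere, dist_eq_norm]
        have : y - xstar = t • (x - xstar) := by rw [hy]; abel
        rw [this, norm_smul, Real.norm_eq_abs, abs_of_pos ht0, ht,
          div_mul_cancel₀ _ hr.ne']
      have hconv : f y ≤ (1 - t) * f xstar + t * f x := by
        have := hf.2 (Set.mem_univ xstar) (Set.mem_univ x)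
          (by linarith : (0:ℝ) ≤ 1 - t) ht0.le (by ring)
        have hyeq : (1 - t) • xstar + t • x = y := by
          rw [hy]; module
        rwa [hyeq] at this
      have hmy : m ≤ f y := hymin hysph
      nlinarith [hmy, hconv, hltm, ht0, ht1, hx]
  refine ⟨fun xm htend => ?_, key⟩
  rw [Metric.tendsto_atTop]
  intro ε hε
  obtain ⟨b, hb, hsub⟩ := key ε hε
  have hev : ∀ᶠ n in atTop, f (xm n) < f xstar + b :=
    htend.eventually_lt_const (by linarith)
  obtain ⟨N, hN⟩ := hev.exists_forall_of_atTop
  refine ⟨N, fun n hn => ?_⟩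
  rw [dist_eq_norm]
  exact hsub (le_of_lt (hN n hn))
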